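/- For every natural number n, the map sending a noncrossing fixed-point-free involution f of Fin (2n) to the word w : Fin (2n) → ℤ defined by w i = 1 if i < f i and w i = −1 if f i < i is a bijection from the set of noncrossing fixed-point-free involutions of Fin (2n) onto the set of Dyck words of length 2n. -/

import Mathlib

/-- A Brauer diagram of degree `n` encoded as a fixed-point-free involution of `Fin (2n)`. -/
def IsBrauerDiagram {m : ℕ} (f : Fin m → Fin m) : Prop :=
  (∀ i, f (f i) = i) ∧ ∀ i, f i ≠ i

/-- Two arcs `{a, f a}` and `{c, f c}` cross: `a < c < f a < f c` with `a < f a`, `c < f c`. -/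
def HasCrossing {m : ℕ} (f : Fin m → Fin m) : Prop :=
  ∃ a c : Fin m, a < f a ∧ c < f c ∧ a < c ∧ c < f a ∧ f a < f c

/-- The word of a fixed-point-free involution: `1` at left-hand ends of arcs,
`-1` at right-hand ends. -/
def wordOf {m : ℕ} (f : Fin m → Fin m) : Fin m → ℤ :=
  fun i => if i < f i then 1 else -1

/-- A Dyck word of length `m`: a `±1`-valued word with nonnegative partial sums and
total sum zero. -/
def IsDyckWord {m : ℕ} (w : Fin m → ℤ) : Prop :=
  (∀ i, w i = 1 ∨ w i = -1) ∧
  (∀ k : ℕ, 0 ≤ ∑ i ∈ Finset.univ.filter (fun i : Fin m => (i : ℕ) < k), w i) ∧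
  ∑ i, w i = 0

namespace TLAux

variable {m : ℕ}

def pref (w : Fin m → ℤ) (k : ℕ) : ℤ :=
  ∑ i ∈ Finset.univ.filter (fun i : Fin m => (i : ℕ) < k), w i

lemma pref_zero (w : Fin m → ℤ) : pref w 0 = 0 := by simp [pref]

lemma pref_succ (w : Fin m → ℤ) (k : ℕ) (hk : k < m) :
    pref w (k + 1) = pref w k + w ⟨k, hk⟩ := by
  unfold pref
  rw [show (Finset.univ.filter fun i : Fin m => (i : ℕ) < k + 1)
      = insert ⟨k, hk⟩ (Finset.univ.filter fun i : Fin m => (i : ℕ) < k) from ?_,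
    Finset.sum_insert (by simp)]
  · ring
  · ext j
    simp [Fin.ext_iff]
    omega

lemma pref_of_le (w : Fin m → ℤ) (k : ℕ) (hk : m ≤ k) : pref w k = ∑ i, w i := by
  unfold pref
  rw [Finset.filter_true_of_mem fun i _ => lt_of_lt_of_le i.isLt hk]

lemma pref_step (w : Fin m → ℤ) (hw : ∀ i, w i = 1 ∨ w i = -1) (k : ℕ) :
    pref w (k + 1) = pref w k + 1 ∨ pref w (k + 1) = pref w k - 1 ∨
      pref w (k + 1) = pref w k := by
  by_cases hk : k < m
  · rw [pref_succ w k hk]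
    rcases hw ⟨k, hk⟩ with h | h <;> rw [h] <;> omega
  · right; right
    rw [pref_of_le w (k+1) (by omega), pref_of_le w k (by omega)]

lemma ivt_up_aux (g : ℕ → ℤ) (hstep : ∀ k, g (k + 1) ≤ g k + 1) (v : ℤ) :
    ∀ (d a : ℕ), g a ≤ v → v ≤ g (a + d) → ∃ t, a ≤ t ∧ t ≤ a + d ∧ g t = v := by
  intro d
  induction d with
  | zero => exact fun a h1 h2 => ⟨a, le_rfl, le_rfl, le_antisymm h1 (by simpa using h2)⟩
  | succ d ih =>
    intro a h1 h2
    rcases eq_or_lt_of_le h1 with he | hlt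
    · exact ⟨a, le_rfl, by omega, he⟩
    · have h3 : g (a + 1) ≤ v := le_trans (hstep a) (by omega)
      obtain ⟨t, ht1, ht2, ht3⟩ := ih (a + 1) h3 (by rw [show a + 1 + d = a + (d + 1) by omega]; exact h2)
      exact ⟨t, by omega, by omega, ht3⟩

lemma ivt_up (g : ℕ → ℤ) (hstep : ∀ k, g (k + 1) ≤ g k + 1) {a b : ℕ} {v : ℤ}
    (hab : a ≤ b) (h1 : g a ≤ v) (h2 : v ≤ g b) : ∃ t, a ≤ t ∧ t ≤ b ∧ g t = v := by
  obtain ⟨d, rfl⟩ := Nat.exists_eq_add_of_le hab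
  exact ivt_up_aux g hstep v d a h1 h2

lemma ivt_down (g : ℕ → ℤ) (hstep : ∀ k, g k - 1 ≤ g (k + 1)) {a b : ℕ} {v : ℤ}
    (hab : a ≤ b) (h1 : v ≤ g a) (h2 : g b ≤ v) : ∃ t, a ≤ t ∧ t ≤ b ∧ g t = v := by
  obtain ⟨t, ht1, ht2, ht3⟩ := ivt_up (fun k => -g k)
    (fun k => show -g (k+1) ≤ -g k + 1 by have := hstep k; omega)
    (v := -v) hab (show -g a ≤ -v by omega) (show -v ≤ -g b by omega)
  exact ⟨t, ht1, ht2, by have : -g t = -v := ht3; omega⟩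

lemma ivt_pref_up (w : Fin m → ℤ) (hw : ∀ i, w i = 1 ∨ w i = -1) {a b : ℕ} {v : ℤ}
    (hab : a ≤ b) (h1 : pref w a ≤ v) (h2 : v ≤ pref w b) :
    ∃ t, a ≤ t ∧ t ≤ b ∧ pref w t = v :=
  ivt_up (pref w) (fun k => by rcases pref_step w hw k with h | h | h <;> omega) hab h1 h2

lemma ivt_pref_down (w : Fin m → ℤ) (hw : ∀ i, w i = 1 ∨ w i = -1) {a b : ℕ} {v : ℤ}
    (hab : a ≤ b) (h1 : v ≤ pref w a) (h2 : pref w b ≤ v) :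
    ∃ t, a ≤ t ∧ t ≤ b ∧ pref w t = v :=
  ivt_down (pref w) (fun k => by rcases pref_step w hw k with h | h | h <;> omega) hab h1 h2


lemma sum_wordOf_nonneg (f : Fin m → Fin m) (hinv : ∀ i, f (f i) = i) (hfp : ∀ i, f i ≠ i)
    (T : Finset (Fin m)) (hT : ∀ j ∈ T, f j < j → f j ∈ T) :
    0 ≤ ∑ i ∈ T, wordOf f i := by
  classical
  have hsplit := Finset.sum_filter_add_sum_filter_not T (fun j => j < f j) (wordOf f)
  have hO : ∑ i ∈ T.filter (fun j => j < f j), wordOf f i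
      = (T.filter (fun j => j < f j)).card := by
    rw [Finset.sum_congr rfl (g := fun _ => (1 : ℤ)) fun j hj => ?_, Finset.sum_const,
      nsmul_eq_mul, mul_one]
    rw [Finset.mem_filter] at hj
    simp [wordOf, hj.2]
  have hC : ∑ i ∈ T.filter (fun j => ¬ j < f j), wordOf f i
      = -((T.filter (fun j => ¬ j < f j)).card : ℤ) := by
    rw [Finset.sum_congr rfl (g := fun _ => (-1 : ℤ)) fun j hj => ?_, Finset.sum_const,
      nsmul_eq_mul]
    · ring
    rw [Finset.mem_filter] at hj
    simp [wordOf, hj.2]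
  have hcard : (T.filter (fun j => ¬ j < f j)).card ≤ (T.filter (fun j => j < f j)).card := by
    apply Finset.card_le_card_of_injOn f
    · intro j hj
      rw [Finset.mem_coe, Finset.mem_filter] at hj ⊢
      have h1 : f j < j := lt_of_le_of_ne (not_lt.mp hj.2) (hfp j)
      refine ⟨hT j hj.1 h1, ?_⟩
      rw [hinv]; exact h1
    · intro a _ b _ hab
      rw [← hinv a, hab, hinv]
  rw [← hsplit, hO, hC]
  omega

lemma sum_wordOf_eq_zero (f : Fin m → Fin m) (hinv : ∀ i, f (f i) = i) (hfp : ∀ i, f i ≠ i)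
    (T : Finset (Fin m)) (hT : ∀ j ∈ T, f j ∈ T) :
    ∑ i ∈ T, wordOf f i = 0 := by
  classical
  have hsplit := Finset.sum_filter_add_sum_filter_not T (fun j => j < f j) (wordOf f)
  have hO : ∑ i ∈ T.filter (fun j => j < f j), wordOf f i
      = (T.filter (fun j => j < f j)).card := by
    rw [Finset.sum_congr rfl (g := fun _ => (1 : ℤ)) fun j hj => ?_, Finset.sum_const,
      nsmul_eq_mul, mul_one]
    rw [Finset.mem_filter] at hj
    simp [wordOf, hj.2]
  have hC : ∑ i ∈ T.filter (fun j => ¬ j < f j), wordOf f i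
      = -((T.filter (fun j => ¬ j < f j)).card : ℤ) := by
    rw [Finset.sum_congr rfl (g := fun _ => (-1 : ℤ)) fun j hj => ?_, Finset.sum_const,
      nsmul_eq_mul]
    · ring
    rw [Finset.mem_filter] at hj
    simp [wordOf, hj.2]
  have hcard : (T.filter (fun j => ¬ j < f j)).card = (T.filter (fun j => j < f j)).card := by
    apply le_antisymm
    · apply Finset.card_le_card_of_injOn f
      · intro j hj
        rw [Finset.mem_coe, Finset.mem_filter] at hj ⊢
        have h1 : f j < j := lt_of_le_of_ne (not_lt.mp hj.2) (hfp j)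
        refine ⟨hT j hj.1, ?_⟩
        rw [hinv]; exact h1
      · intro a _ b _ hab
        rw [← hinv a, hab, hinv]
    · apply Finset.card_le_card_of_injOn f
      · intro j hj
        rw [Finset.mem_coe, Finset.mem_filter] at hj ⊢
        refine ⟨hT j hj.1, ?_⟩
        rw [hinv]; exact not_lt.mpr (le_of_lt hj.2)
      · intro a _ b _ hab
        rw [← hinv a, hab, hinv]
  rw [← hsplit, hO, hC, hcard]
  ring

lemma isDyck_wordOf (f : Fin m → Fin m) (hinv : ∀ i, f (f i) = i) (hfp : ∀ i, f i ≠ i) :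
    (∀ i, wordOf f i = 1 ∨ wordOf f i = -1) ∧ (∀ k : ℕ, 0 ≤ pref (wordOf f) k) ∧
      ∑ i, wordOf f i = 0 := by
  refine ⟨fun i => ?_, fun k => ?_, ?_⟩
  · by_cases h : i < f i <;> simp [wordOf, h]
  · apply sum_wordOf_nonneg f hinv hfp
    intro j hj hlt
    rw [Finset.mem_filter] at hj ⊢
    exact ⟨Finset.mem_univ _, lt_trans hlt hj.2⟩
  · exact sum_wordOf_eq_zero f hinv hfp Finset.univ fun j _ => Finset.mem_univ _


variable {f : Fin m → Fin m}

lemma arc_nested (hinv : ∀ i, f (f i) = i) (hfp : ∀ i, f i ≠ i) (hnc : ¬ HasCrossing f)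
    {i j : Fin m} (hi : i < f i) (h1 : i < j) (h2 : j < f i) : i < f j ∧ f j < f i := by
  have hinj : Function.Injective f := fun a b hab => by rw [← hinv a, hab, hinv]
  have hji : f j ≠ i := fun h => absurd h2 (by rw [← hinv j, h]; exact lt_irrefl _)
  have hjf : f j ≠ f i := fun h => absurd (hinj h) (ne_of_gt h1)
  rcases lt_trichotomy j (f j) with hc | hc | hc
  · have hlt : f j < f i := by
      by_contra hge
      push_neg at hge
      exact hnc ⟨i, j, hi, hc, h1, h2, lt_of_le_of_ne hge (Ne.symm hjf)⟩
    exact ⟨lt_trans h1 hc, hlt⟩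
  · exact absurd hc.symm (hfp j)
  · have hlt : i < f j := by
      by_contra hge
      push_neg at hge
      have hfji : f j < i := lt_of_le_of_ne hge hji
      refine hnc ⟨f j, i, ?_, hi, hfji, ?_, ?_⟩ <;> rw [hinv]
      · exact hc
      · exact h1
      · exact h2
    exact ⟨hlt, lt_trans hc h2⟩

lemma pref_arc (hinv : ∀ i, f (f i) = i) (hfp : ∀ i, f i ≠ i) (hnc : ¬ HasCrossing f)
    {i : Fin m} (hi : i < f i) :
    pref (wordOf f) ((f i : ℕ) + 1) = pref (wordOf f) (i : ℕ) := by
  classical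
  have hii : (i : ℕ) < (f i : ℕ) := hi
  set T : Finset (Fin m) :=
    Finset.univ.filter (fun t : Fin m => (i : ℕ) ≤ (t : ℕ) ∧ (t : ℕ) ≤ (f i : ℕ)) with hT
  have hsplit : (Finset.univ.filter fun t : Fin m => (t : ℕ) < (f i : ℕ) + 1)
      = (Finset.univ.filter fun t : Fin m => (t : ℕ) < (i : ℕ)) ∪ T := by
    ext t
    simp [hT]
    omega
  have hdisj : Disjoint (Finset.univ.filter fun t : Fin m => (t : ℕ) < (i : ℕ)) T := by
    rw [Finset.disjoint_left]
    intro t ht ht'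
    rw [Finset.mem_filter] at ht
    rw [hT, Finset.mem_filter] at ht'
    omega
  have hzero : ∑ t ∈ T, wordOf f t = 0 := by
    apply sum_wordOf_eq_zero f hinv hfp
    intro t ht
    rw [hT, Finset.mem_filter] at ht ⊢
    obtain ⟨-, ht1, ht2⟩ := ht
    refine ⟨Finset.mem_univ _, ?_⟩
    rcases eq_or_lt_of_le ht1 with he | hlt1
    · have : t = i := Fin.ext he.symm
      subst this
      omega
    rcases eq_or_lt_of_le ht2 with he | hlt2
    · have : t = f i := Fin.ext he
      subst this
      rw [hinv]
      omega
    · have := arc_nested hinv hfp hnc hi hlt1 hlt2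
      exact ⟨le_of_lt this.1, le_of_lt this.2⟩
  show pref (wordOf f) ((f i : ℕ) + 1) = pref (wordOf f) (i : ℕ)
  unfold pref
  rw [hsplit, Finset.sum_union hdisj, hzero, add_zero]

lemma pref_lt_inside (hinv : ∀ i, f (f i) = i) (hfp : ∀ i, f i ≠ i) (hnc : ¬ HasCrossing f)
    {i j : Fin m} (hi : i < f i) (h1 : i < j) (h2 : j < f i) :
    pref (wordOf f) (i : ℕ) < pref (wordOf f) ((j : ℕ) + 1) := by
  classical
  have hij : (i : ℕ) < (j : ℕ) := h1
  set T : Finset (Fin m) :=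
    Finset.univ.filter (fun t : Fin m => (i : ℕ) < (t : ℕ) ∧ (t : ℕ) ≤ (j : ℕ)) with hT
  have hsplit : (Finset.univ.filter fun t : Fin m => (t : ℕ) < (j : ℕ) + 1)
      = (Finset.univ.filter fun t : Fin m => (t : ℕ) < (i : ℕ) + 1) ∪ T := by
    ext t
    simp [hT]
    omega
  have hdisj : Disjoint (Finset.univ.filter fun t : Fin m => (t : ℕ) < (i : ℕ) + 1) T := by
    rw [Finset.disjoint_left]
    intro t ht ht'
    rw [Finset.mem_filter] at ht
    rw [hT, Finset.mem_filter] at ht'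
    omega
  have hnn : 0 ≤ ∑ t ∈ T, wordOf f t := by
    apply sum_wordOf_nonneg f hinv hfp
    intro t ht hlt
    rw [hT, Finset.mem_filter] at ht ⊢
    obtain ⟨-, ht1, ht2⟩ := ht
    have htfi : t < f i := lt_of_le_of_lt (show (t:ℕ) ≤ (j:ℕ) from ht2) h2
    have hit : i < t := ht1
    have := arc_nested hinv hfp hnc hi hit htfi
    refine ⟨Finset.mem_univ _, this.1, ?_⟩
    have : (f t : ℕ) < (t : ℕ) := hlt
    omega
  have hstep : pref (wordOf f) ((i : ℕ) + 1) = pref (wordOf f) (i : ℕ) + 1 := by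
    rw [pref_succ (wordOf f) (i : ℕ) i.isLt]
    have : (⟨(i : ℕ), i.isLt⟩ : Fin m) = i := Fin.eta i i.isLt
    rw [this]
    simp [wordOf, hi]
  have : pref (wordOf f) ((j : ℕ) + 1)
      = pref (wordOf f) ((i : ℕ) + 1) + ∑ t ∈ T, wordOf f t := by
    unfold pref
    rw [hsplit, Finset.sum_union hdisj]
  omega


lemma opener_eq {g : Fin m → Fin m}
    (hinvf : ∀ i, f (f i) = i) (hfpf : ∀ i, f i ≠ i) (hncf : ¬ HasCrossing f)
    (hinvg : ∀ i, g (g i) = i) (hfpg : ∀ i, g i ≠ i) (hncg : ¬ HasCrossing g)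
    (hw : wordOf f = wordOf g) {i : Fin m} (hi : i < f i) : f i = g i := by
  have hgi : i < g i := by
    by_contra h
    have h1 : wordOf f i = 1 := by simp [wordOf, hi]
    have h2 : wordOf g i = -1 := by simp [wordOf, h]
    rw [hw, h2] at h1
    norm_num at h1
  have h1 := pref_arc hinvf hfpf hncf hi
  have h2 := pref_arc hinvg hfpg hncg hgi
  rw [← hw] at h2
  apply le_antisymm
  · by_contra h
    push_neg at h
    exact absurd h2 (ne_of_gt (pref_lt_inside hinvf hfpf hncf hi hgi h))
  · by_contra h
    push_neg at h
    have := pref_lt_inside hinvg hfpg hncg hgi hi h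
    rw [← hw, h1] at this
    exact lt_irrefl _ this

lemma word_injective {g : Fin m → Fin m}
    (hinvf : ∀ i, f (f i) = i) (hfpf : ∀ i, f i ≠ i) (hncf : ¬ HasCrossing f)
    (hinvg : ∀ i, g (g i) = i) (hfpg : ∀ i, g i ≠ i) (hncg : ¬ HasCrossing g)
    (hw : wordOf f = wordOf g) : f = g := by
  have key : ∀ i : Fin m, i < f i → f i = g i := fun i hi =>
    opener_eq hinvf hfpf hncf hinvg hfpg hncg hw hi
  funext i
  rcases lt_trichotomy i (f i) with hc | hc | hc
  · exact key i hc
  · exact absurd hc.symm (hfpf i)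
  · have ha : f i < f (f i) := by rw [hinvf]; exact hc
    have := key (f i) ha
    rw [hinvf] at this
    rw [← hinvg (f i), ← this]


def Aset (w : Fin m → ℤ) (i : Fin m) : Finset (Fin m) :=
  Finset.univ.filter fun j : Fin m => i < j ∧ pref w ((j : ℕ) + 1) = pref w (i : ℕ)

def Bset (w : Fin m → ℤ) (i : Fin m) : Finset (Fin m) :=
  Finset.univ.filter fun j : Fin m => j < i ∧ pref w (j : ℕ) = pref w ((i : ℕ) + 1)

def matchOf (w : Fin m → ℤ) (i : Fin m) : Fin m :=
  if 0 < w i then WithTop.untopD i (Aset w i).min else WithBot.unbotD i (Bset w i).max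

lemma min_unbot'_spec (s : Finset (Fin m)) (hne : s.Nonempty) (d : Fin m) :
    WithTop.untopD d s.min ∈ s ∧ ∀ j ∈ s, WithTop.untopD d s.min ≤ j := by
  rw [← Finset.coe_min' hne, WithTop.untopD_coe]
  exact ⟨Finset.min'_mem s hne, fun j hj => Finset.min'_le s j hj⟩

lemma max_unbot'_spec (s : Finset (Fin m)) (hne : s.Nonempty) (d : Fin m) :
    WithBot.unbotD d s.max ∈ s ∧ ∀ j ∈ s, j ≤ WithBot.unbotD d s.max := by
  rw [← Finset.coe_max' hne, WithBot.unbotD_coe]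
  exact ⟨Finset.max'_mem s hne, fun j hj => Finset.le_max' s j hj⟩

variable {w : Fin m → ℤ}

lemma pref_succ' (i : Fin m) : pref w ((i : ℕ) + 1) = pref w (i : ℕ) + w i := by
  rw [pref_succ w (i : ℕ) i.isLt, Fin.eta]

section specs

variable (hw1 : ∀ i, w i = 1 ∨ w i = -1) (hpos : ∀ k, 0 ≤ pref w k) (hsum : ∑ i, w i = 0)
include hw1 hpos

include hsum in
lemma Aset_nonempty {i : Fin m} (hi : w i = 1) : (Aset w i).Nonempty := by
  have hm0 : pref w m = 0 := by rw [pref_of_le w m le_rfl]; exact hsum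
  have hstep : pref w ((i : ℕ) + 1) = pref w (i : ℕ) + 1 := by rw [pref_succ' i, hi]
  have him := i.isLt
  obtain ⟨t, ht1, ht2, ht3⟩ := ivt_pref_down w hw1 (a := (i : ℕ) + 1) (b := m)
    (v := pref w (i : ℕ)) (by omega) (by omega) (by rw [hm0]; exact hpos (i : ℕ))
  have htne : t ≠ (i : ℕ) + 1 := fun h => by rw [h, hstep] at ht3; omega
  refine ⟨⟨t - 1, by omega⟩, ?_⟩
  rw [Aset, Finset.mem_filter]
  refine ⟨Finset.mem_univ _, ?_, ?_⟩
  · rw [Fin.lt_def]; simp; omega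
  · show pref w (t - 1 + 1) = pref w (i : ℕ)
    rw [show t - 1 + 1 = t by omega]; exact ht3

lemma Bset_nonempty {i : Fin m} (hi : w i = -1) : (Bset w i).Nonempty := by
  have hstep : pref w ((i : ℕ) + 1) = pref w (i : ℕ) - 1 := by rw [pref_succ' i, hi]; ring
  have him := i.isLt
  obtain ⟨t, ht1, ht2, ht3⟩ := ivt_pref_up w hw1 (a := 0) (b := (i : ℕ))
    (v := pref w ((i : ℕ) + 1)) (by omega) (by rw [pref_zero]; exact hpos ((i : ℕ) + 1))
    (by omega)
  have htne : t ≠ (i : ℕ) := fun h => by rw [h] at ht3; omega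
  refine ⟨⟨t, by omega⟩, ?_⟩
  rw [Bset, Finset.mem_filter]
  refine ⟨Finset.mem_univ _, ?_, ht3⟩
  rw [Fin.lt_def]; simp; omega

include hsum in
lemma match_opener_spec {i : Fin m} (hi : w i = 1) :
    matchOf w i ∈ Aset w i ∧ ∀ j ∈ Aset w i, matchOf w i ≤ j := by
  rw [matchOf, if_pos (by rw [hi]; norm_num)]
  exact min_unbot'_spec _ (Aset_nonempty hw1 hpos hsum hi) i

lemma match_closer_spec {i : Fin m} (hi : w i = -1) :
    matchOf w i ∈ Bset w i ∧ ∀ j ∈ Bset w i, j ≤ matchOf w i := by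
  rw [matchOf, if_neg (by rw [hi]; norm_num)]
  exact max_unbot'_spec _ (Bset_nonempty hw1 hpos hi) i

include hsum in
lemma match_opener_lt {i : Fin m} (hi : w i = 1) : i < matchOf w i := by
  have := (match_opener_spec hw1 hpos hsum hi).1
  rw [Aset, Finset.mem_filter] at this
  exact this.2.1

include hsum in
lemma match_opener_pref {i : Fin m} (hi : w i = 1) :
    pref w ((matchOf w i : ℕ) + 1) = pref w (i : ℕ) := by
  have := (match_opener_spec hw1 hpos hsum hi).1
  rw [Aset, Finset.mem_filter] at this
  exact this.2.2

lemma match_closer_lt {i : Fin m} (hi : w i = -1) : matchOf w i < i := by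
  have := (match_closer_spec hw1 hpos hi).1
  rw [Bset, Finset.mem_filter] at this
  exact this.2.1

lemma match_closer_pref {i : Fin m} (hi : w i = -1) :
    pref w (matchOf w i : ℕ) = pref w ((i : ℕ) + 1) := by
  have := (match_closer_spec hw1 hpos hi).1
  rw [Bset, Finset.mem_filter] at this
  exact this.2.2

include hsum in
lemma interior_above {i : Fin m} (hi : w i = 1) (t : ℕ) (ht1 : (i : ℕ) < t)
    (ht2 : t ≤ (matchOf w i : ℕ)) : pref w (i : ℕ) < pref w t := by
  by_contra h
  push_neg at h
  have hstep : pref w ((i : ℕ) + 1) = pref w (i : ℕ) + 1 := by rw [pref_succ' i, hi]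
  obtain ⟨s, hs1, hs2, hs3⟩ := ivt_pref_down w hw1 (a := (i : ℕ) + 1) (b := t)
    (v := pref w (i : ℕ)) (by omega) (by omega) h
  have hsne : s ≠ (i : ℕ) + 1 := fun hq => by rw [hq, hstep] at hs3; omega
  have hjm := (matchOf w i).isLt
  have hmem : (⟨s - 1, by omega⟩ : Fin m) ∈ Aset w i := by
    rw [Aset, Finset.mem_filter]
    refine ⟨Finset.mem_univ _, ?_, ?_⟩
    · rw [Fin.lt_def]; simp; omega
    · show pref w (s - 1 + 1) = pref w (i : ℕ)
      rw [show s - 1 + 1 = s by omega]; exact hs3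
  have := (match_opener_spec hw1 hpos hsum hi).2 _ hmem
  rw [Fin.le_def] at this
  simp at this
  omega

lemma interior_below {i : Fin m} (hi : w i = -1) (t : ℕ) (ht1 : (matchOf w i : ℕ) < t)
    (ht2 : t ≤ (i : ℕ)) : pref w ((i : ℕ) + 1) < pref w t := by
  by_contra h
  push_neg at h
  have hstep : pref w ((i : ℕ) + 1) = pref w (i : ℕ) - 1 := by rw [pref_succ' i, hi]; ring
  obtain ⟨s, hs1, hs2, hs3⟩ := ivt_pref_up w hw1 (a := t) (b := (i : ℕ))
    (v := pref w ((i : ℕ) + 1)) ht2 h (by omega)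
  have hsne : s ≠ (i : ℕ) := fun hq => by rw [hq] at hs3; omega
  have him := i.isLt
  have hmem : (⟨s, by omega⟩ : Fin m) ∈ Bset w i := by
    rw [Bset, Finset.mem_filter]
    refine ⟨Finset.mem_univ _, ?_, hs3⟩
    rw [Fin.lt_def]; simp; omega
  have := (match_closer_spec hw1 hpos hi).2 _ hmem
  rw [Fin.le_def] at this
  simp at this
  omega

include hsum in
lemma match_word_opener {i : Fin m} (hi : w i = 1) : w (matchOf w i) = -1 := by
  set j := matchOf w i with hj
  have h1 : pref w (i : ℕ) < pref w (j : ℕ) :=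
    interior_above hw1 hpos hsum hi (j : ℕ) (match_opener_lt hw1 hpos hsum hi) le_rfl
  have h2 : pref w ((j : ℕ) + 1) = pref w (i : ℕ) := match_opener_pref hw1 hpos hsum hi
  have h3 : pref w ((j : ℕ) + 1) = pref w (j : ℕ) + w j := pref_succ' j
  rcases hw1 j with h | h
  · rw [h] at h3; omega
  · exact h

lemma match_word_closer {i : Fin m} (hi : w i = -1) : w (matchOf w i) = 1 := by
  set j := matchOf w i with hj
  have hji : (j : ℕ) < (i : ℕ) := match_closer_lt hw1 hpos hi
  have h1 : pref w ((i : ℕ) + 1) < pref w ((j : ℕ) + 1) :=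
    interior_below hw1 hpos hi ((j : ℕ) + 1) (by omega) (by omega)
  have h2 : pref w (j : ℕ) = pref w ((i : ℕ) + 1) := match_closer_pref hw1 hpos hi
  have h3 : pref w ((j : ℕ) + 1) = pref w (j : ℕ) + w j := pref_succ' j
  rcases hw1 j with h | h
  · exact h
  · rw [h] at h3; omega

include hsum in
lemma match_invol (i : Fin m) : matchOf w (matchOf w i) = i := by
  rcases hw1 i with hi | hi
  · set j := matchOf w i with hj
    have hij : i < j := match_opener_lt hw1 hpos hsum hi
    have hwj : w j = -1 := match_word_opener hw1 hpos hsum hi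
    have hmemi : i ∈ Bset w j := by
      rw [Bset, Finset.mem_filter]
      exact ⟨Finset.mem_univ _, hij, (match_opener_pref hw1 hpos hsum hi).symm⟩
    have hle : i ≤ matchOf w j := (match_closer_spec hw1 hpos hwj).2 _ hmemi
    have hmem := (match_closer_spec hw1 hpos hwj).1
    rw [Bset, Finset.mem_filter] at hmem
    refine le_antisymm ?_ hle
    by_contra h
    push_neg at h
    have := interior_above hw1 hpos hsum hi (matchOf w j : ℕ) h (le_of_lt hmem.2.1)
    rw [hmem.2.2, match_opener_pref hw1 hpos hsum hi] at this
    exact lt_irrefl _ this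
  · set j := matchOf w i with hj
    have hji : j < i := match_closer_lt hw1 hpos hi
    have hwj : w j = 1 := match_word_closer hw1 hpos hi
    have hmemi : i ∈ Aset w j := by
      rw [Aset, Finset.mem_filter]
      exact ⟨Finset.mem_univ _, hji, (match_closer_pref hw1 hpos hi).symm⟩
    have hle : matchOf w j ≤ i := (match_opener_spec hw1 hpos hsum hwj).2 _ hmemi
    have hmem := (match_opener_spec hw1 hpos hsum hwj).1
    rw [Aset, Finset.mem_filter] at hmem
    refine le_antisymm hle ?_
    by_contra h
    push_neg at h
    have hlt : (j : ℕ) < (matchOf w j : ℕ) + 1 := by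
      have := hmem.2.1
      rw [Fin.lt_def] at this
      omega
    have := interior_below hw1 hpos hi ((matchOf w j : ℕ) + 1) (by omega) h
    rw [hmem.2.2, match_closer_pref hw1 hpos hi] at this
    exact lt_irrefl _ this

include hsum in
lemma match_fpf (i : Fin m) : matchOf w i ≠ i := by
  rcases hw1 i with hi | hi
  · exact ne_of_gt (match_opener_lt hw1 hpos hsum hi)
  · exact ne_of_lt (match_closer_lt hw1 hpos hi)

include hsum in
lemma wordOf_match : wordOf (matchOf w) = w := by
  funext i
  rcases hw1 i with hi | hi
  · rw [wordOf, if_pos (match_opener_lt hw1 hpos hsum hi), hi]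
  · rw [wordOf, if_neg (not_lt.mpr (le_of_lt (match_closer_lt hw1 hpos hi))), hi]

include hsum in
lemma match_nc : ¬ HasCrossing (matchOf w) := by
  rintro ⟨a, c, ha, hc, h1, h2, h3⟩
  have hwa : w a = 1 := by
    rcases hw1 a with h | h
    · exact h
    · exact absurd ha (not_lt.mpr (le_of_lt (match_closer_lt hw1 hpos h)))
  have hwc : w c = 1 := by
    rcases hw1 c with h | h
    · exact h
    · exact absurd hc (not_lt.mpr (le_of_lt (match_closer_lt hw1 hpos h)))
  have hgc : pref w (a : ℕ) < pref w (c : ℕ) :=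
    interior_above hw1 hpos hsum hwa (c : ℕ) h1 (le_of_lt h2)
  have hfa1 : pref w ((matchOf w a : ℕ) + 1) = pref w (a : ℕ) :=
    match_opener_pref hw1 hpos hsum hwa
  have hstep : pref w ((c : ℕ) + 1) = pref w (c : ℕ) + 1 := by rw [pref_succ' c, hwc]
  have hcfa : (c : ℕ) < (matchOf w a : ℕ) := h2
  obtain ⟨s, hs1, hs2, hs3⟩ := ivt_pref_down w hw1 (a := (c : ℕ) + 1)
    (b := (matchOf w a : ℕ) + 1) (v := pref w (c : ℕ)) (by omega) (by omega) (by omega)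
  have hsne : s ≠ (c : ℕ) + 1 := fun hq => by rw [hq, hstep] at hs3; omega
  have hjm := (matchOf w a).isLt
  have hmem : (⟨s - 1, by omega⟩ : Fin m) ∈ Aset w c := by
    rw [Aset, Finset.mem_filter]
    refine ⟨Finset.mem_univ _, ?_, ?_⟩
    · rw [Fin.lt_def]; simp; omega
    · show pref w (s - 1 + 1) = pref w (c : ℕ)
      rw [show s - 1 + 1 = s by omega]; exact hs3
  have hminle := (match_opener_spec hw1 hpos hsum hwc).2 _ hmem
  rw [Fin.le_def] at hminle
  simp at hminle
  have h3' : (matchOf w a : ℕ) < (matchOf w c : ℕ) := h3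
  omega

end specs

end TLAux



open TLAux in
theorem TL_dyckWord_bijection (n : ℕ) :
    Set.BijOn (fun f : Fin (2 * n) → Fin (2 * n) => wordOf f)
      {f : Fin (2 * n) → Fin (2 * n) | IsBrauerDiagram f ∧ ¬ HasCrossing f}
      {w : Fin (2 * n) → ℤ | IsDyckWord w} := by
  refine ⟨?_, ?_, ?_⟩
  · rintro f ⟨⟨hinv, hfp⟩, -⟩
    have h := isDyck_wordOf f hinv hfp
    exact ⟨h.1, h.2.1, h.2.2⟩
  · rintro f ⟨⟨hinvf, hfpf⟩, hncf⟩ g ⟨⟨hinvg, hfpg⟩, hncg⟩ hw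
    exact word_injective hinvf hfpf hncf hinvg hfpg hncg hw
  · rintro w ⟨hw1, hpos, hsum⟩
    have hpos' : ∀ k, 0 ≤ pref w k := hpos
    refine ⟨matchOf w, ⟨⟨match_invol hw1 hpos' hsum, match_fpf hw1 hpos' hsum⟩,
      match_nc hw1 hpos' hsum⟩, wordOf_match hw1 hpos' hsum⟩
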